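/- Let T be a tree in which three distinct vertices u, v, w all have degree 3, and let w₁, w₂ be the two neighbors of w lying on neither the u–w path nor the v–w path. Suppose every vertex on the u–w path and v–w path other than u, v, w has degree 4. Let T′ = T − {ww₁, ww₂} + {uw₁, vw₂}. Then W_p(T) ≤ W_p(T′). -/

import Mathlib

set_option linter.unusedSectionVars false

open SimpleGraph Finset

noncomputable def deg {V : Type*} [Fintype V] (G : SimpleGraph V) (v : V) : ℕ := by
  classical exact G.degree v

noncomputable def Wp {V : Type*} [Fintype V] (G : SimpleGraph V) : ℤ := by
  classical
  exact ∑ e ∈ G.edgeFinset,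
    Sym2.lift ⟨fun u v => ((deg G u : ℤ) - 1) * ((deg G v : ℤ) - 1),
      fun u v => by ring⟩ e

lemma deg_eq' {V : Type*} [Fintype V] (G : SimpleGraph V) [DecidableRel G.Adj] (v : V) :
    deg G v = G.degree v := by unfold deg; congr!

noncomputable def Fe {V : Type*} [Fintype V] (G : SimpleGraph V) : Sym2 V → ℤ :=
  Sym2.lift ⟨fun u v => ((deg G u : ℤ) - 1) * ((deg G v : ℤ) - 1), fun u v => by ring⟩

lemma Fe_mk {V : Type*} [Fintype V] (G : SimpleGraph V) [DecidableRel G.Adj] (a b : V) :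
    Fe G s(a, b) = ((G.degree a : ℤ) - 1) * ((G.degree b : ℤ) - 1) := by
  simp [Fe, deg_eq']

lemma Wp_eq' {V : Type*} [Fintype V] (G : SimpleGraph V) [DecidableEq V] [DecidableRel G.Adj] :
    Wp G = ∑ e ∈ G.edgeFinset, Fe G e := by
  unfold Wp Fe; congr!

section Aux

variable {V : Type*} [Fintype V] [DecidableEq V] {T T' : SimpleGraph V}
  [DecidableRel T.Adj] [DecidableRel T'.Adj] {u v w w₁ w₂ z : V}

lemma aux_adj (hE : T'.edgeSet = (T.edgeSet \ {s(w, w₁), s(w, w₂)}) ∪ {s(u, w₁), s(v, w₂)}) :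
    ∀ a b : V, T'.Adj a b ↔
      ((T.Adj a b ∧ s(a,b) ≠ s(w,w₁) ∧ s(a,b) ≠ s(w,w₂)) ∨ s(a,b) = s(u,w₁) ∨ s(a,b) = s(v,w₂)) := by
  intro a b
  rw [← SimpleGraph.mem_edgeSet, hE]
  simp only [Set.mem_union, Set.mem_diff, Set.mem_insert_iff, Set.mem_singleton_iff,
    SimpleGraph.mem_edgeSet]
  tauto

lemma aux_degu
    (hadj' : ∀ a b : V, T'.Adj a b ↔
      ((T.Adj a b ∧ s(a,b) ≠ s(w,w₁) ∧ s(a,b) ≠ s(w,w₂)) ∨ s(a,b) = s(u,w₁) ∨ s(a,b) = s(v,w₂)))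
    (huw : u ≠ w) (huw₁ : u ≠ w₁) (huw₂ : u ≠ w₂) (huv : u ≠ v)
    (hnadj : ¬ T.Adj u w₁) :
    T'.degree u = T.degree u + 1 := by
  classical
  rw [← card_neighborFinset_eq_degree, ← card_neighborFinset_eq_degree]
  have hN : T'.neighborFinset u = insert w₁ (T.neighborFinset u) := by
    ext x
    simp only [SimpleGraph.mem_neighborFinset, Finset.mem_insert]
    rw [hadj' u x]
    constructor
    · rintro (⟨h, -, -⟩ | h | h)
      · exact .inr h
      · rcases Sym2.eq_iff.1 h with ⟨-, rfl⟩ | ⟨h1, -⟩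
        · exact .inl rfl
        · exact absurd h1 huw₁
      · rcases Sym2.eq_iff.1 h with ⟨h1, -⟩ | ⟨h1, -⟩
        · exact absurd h1 huv
        · exact absurd h1 huw₂
    · rintro (rfl | h)
      · exact .inr (.inl (Sym2.eq_iff.2 (.inl ⟨rfl, rfl⟩)))
      · refine .inl ⟨h, fun he => ?_, fun he => ?_⟩
        · rcases Sym2.eq_iff.1 he with ⟨h1, -⟩ | ⟨h1, -⟩
          · exact huw h1
          · exact huw₁ h1
        · rcases Sym2.eq_iff.1 he with ⟨h1, -⟩ | ⟨h1, -⟩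
          · exact huw h1
          · exact huw₂ h1
  rw [hN, Finset.card_insert_of_notMem (by
    simp only [SimpleGraph.mem_neighborFinset]; exact hnadj)]

lemma aux_degw
    (hadj' : ∀ a b : V, T'.Adj a b ↔
      ((T.Adj a b ∧ s(a,b) ≠ s(w,w₁) ∧ s(a,b) ≠ s(w,w₂)) ∨ s(a,b) = s(u,w₁) ∨ s(a,b) = s(v,w₂)))
    (hNw : T.neighborFinset w = {w₁, w₂, z})
    (hwu : w ≠ u) (hwv : w ≠ v) (hwne₁ : w ≠ w₁) (hwne₂ : w ≠ w₂)
    (hzw₁ : z ≠ w₁) (hzw₂ : z ≠ w₂) (hadj_wz : T.Adj w z) :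
    T'.degree w = 1 := by
  classical
  rw [← card_neighborFinset_eq_degree]
  have hN : T'.neighborFinset w = {z} := by
    ext x
    simp only [SimpleGraph.mem_neighborFinset, Finset.mem_singleton]
    rw [hadj' w x]
    constructor
    · rintro (⟨h, h1, h2⟩ | h | h)
      · have hx : x ∈ T.neighborFinset w := by
          simp only [SimpleGraph.mem_neighborFinset]; exact h
        rw [hNw] at hx
        simp only [Finset.mem_insert, Finset.mem_singleton] at hx
        rcases hx with rfl | rfl | rfl
        · exact absurd (Sym2.eq_iff.2 (.inl ⟨rfl, rfl⟩)) h1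
        · exact absurd (Sym2.eq_iff.2 (.inl ⟨rfl, rfl⟩)) h2
        · rfl
      · rcases Sym2.eq_iff.1 h with ⟨h1, -⟩ | ⟨h1, -⟩
        · exact absurd h1 hwu
        · exact absurd h1 hwne₁
      · rcases Sym2.eq_iff.1 h with ⟨h1, -⟩ | ⟨h1, -⟩
        · exact absurd h1 hwv
        · exact absurd h1 hwne₂
    · rintro rfl
      refine .inl ⟨hadj_wz, fun he => ?_, fun he => ?_⟩
      · rcases Sym2.eq_iff.1 he with ⟨-, h1⟩ | ⟨h1, -⟩
        · exact hzw₁ h1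
        · exact hwne₁ h1
      · rcases Sym2.eq_iff.1 he with ⟨-, h1⟩ | ⟨h1, -⟩
        · exact hzw₂ h1
        · exact hwne₂ h1
  rw [hN, Finset.card_singleton]

lemma aux_degw₁
    (hadj' : ∀ a b : V, T'.Adj a b ↔
      ((T.Adj a b ∧ s(a,b) ≠ s(w,w₁) ∧ s(a,b) ≠ s(w,w₂)) ∨ s(a,b) = s(u,w₁) ∨ s(a,b) = s(v,w₂)))
    (hw₁w : w₁ ≠ w) (hw₁w₂ : w₁ ≠ w₂) (hw₁u : w₁ ≠ u) (hw₁v : w₁ ≠ v)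
    (hadj_ww₁ : T.Adj w w₁) (hnadj : ¬ T.Adj u w₁) :
    T'.degree w₁ = T.degree w₁ := by
  classical
  rw [← card_neighborFinset_eq_degree, ← card_neighborFinset_eq_degree]
  have hwmem : w ∈ T.neighborFinset w₁ := by
    simp only [SimpleGraph.mem_neighborFinset]; exact hadj_ww₁.symm
  have hN : T'.neighborFinset w₁ = insert u ((T.neighborFinset w₁).erase w) := by
    ext x
    simp only [SimpleGraph.mem_neighborFinset, Finset.mem_insert, Finset.mem_erase]
    rw [hadj' w₁ x]
    constructor
    · rintro (⟨h, h1, -⟩ | h | h)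
      · exact .inr ⟨fun hxw => h1 (Sym2.eq_iff.2 (.inr ⟨rfl, hxw⟩)), h⟩
      · rcases Sym2.eq_iff.1 h with ⟨h1, -⟩ | ⟨-, rfl⟩
        · exact absurd h1 hw₁u
        · exact .inl rfl
      · rcases Sym2.eq_iff.1 h with ⟨h1, -⟩ | ⟨h1, -⟩
        · exact absurd h1 hw₁v
        · exact absurd h1 hw₁w₂
    · rintro (rfl | ⟨hxw, h⟩)
      · exact .inr (.inl (Sym2.eq_iff.2 (.inr ⟨rfl, rfl⟩)))
      · refine .inl ⟨h, fun he => ?_, fun he => ?_⟩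
        · rcases Sym2.eq_iff.1 he with ⟨h1, -⟩ | ⟨-, h1⟩
          · exact hw₁w h1
          · exact hxw h1
        · rcases Sym2.eq_iff.1 he with ⟨h1, -⟩ | ⟨h1, -⟩
          · exact hw₁w h1
          · exact hw₁w₂ h1
  rw [hN, Finset.card_insert_of_notMem (by
      simp only [Finset.mem_erase, SimpleGraph.mem_neighborFinset]
      rintro ⟨-, h⟩; exact hnadj h.symm),
    Finset.card_erase_of_mem hwmem]
  have hpos : 0 < (T.neighborFinset w₁).card := Finset.card_pos.2 ⟨w, hwmem⟩
  omega

lemma aux_deggen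
    (hadj' : ∀ a b : V, T'.Adj a b ↔
      ((T.Adj a b ∧ s(a,b) ≠ s(w,w₁) ∧ s(a,b) ≠ s(w,w₂)) ∨ s(a,b) = s(u,w₁) ∨ s(a,b) = s(v,w₂)))
    {x : V} (hxu : x ≠ u) (hxv : x ≠ v) (hxw : x ≠ w) (hxw₁ : x ≠ w₁) (hxw₂ : x ≠ w₂) :
    T'.degree x = T.degree x := by
  classical
  rw [← card_neighborFinset_eq_degree, ← card_neighborFinset_eq_degree]
  congr 1
  ext y
  simp only [SimpleGraph.mem_neighborFinset]
  rw [hadj' x y]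
  constructor
  · rintro (⟨h, -, -⟩ | h | h)
    · exact h
    · rcases Sym2.eq_iff.1 h with ⟨h1, -⟩ | ⟨h1, -⟩
      · exact absurd h1 hxu
      · exact absurd h1 hxw₁
    · rcases Sym2.eq_iff.1 h with ⟨h1, -⟩ | ⟨h1, -⟩
      · exact absurd h1 hxv
      · exact absurd h1 hxw₂
  · intro h
    refine .inl ⟨h, fun he => ?_, fun he => ?_⟩
    · rcases Sym2.eq_iff.1 he with ⟨h1, -⟩ | ⟨h1, -⟩
      · exact hxw h1
      · exact hxw₁ h1
    · rcases Sym2.eq_iff.1 he with ⟨h1, -⟩ | ⟨h1, -⟩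
      · exact hxw h1
      · exact hxw₂ h1

lemma aux_perEdge
    (hNw : T.neighborFinset w = {w₁, w₂, z})
    (hd'u : T'.degree u = 4) (hd'v : T'.degree v = 4)
    (hdu : T.degree u = 3) (hdv : T.degree v = 3)
    (hdeq : ∀ x : V, x ≠ u → x ≠ v → x ≠ w → T'.degree x = T.degree x) :
    ∀ a b : V, T.Adj a b → s(a,b) ≠ s(w,w₁) → s(a,b) ≠ s(w,w₂) → s(a,b) ≠ s(w,z) →
      0 ≤ Fe T' s(a,b) - Fe T s(a,b) := by
  have hwside : ∀ a b : V, T.Adj a b → s(a,b) ≠ s(w,w₁) → s(a,b) ≠ s(w,w₂) →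
      s(a,b) ≠ s(w,z) → a ≠ w := by
    intro a b hab h1 h2 h3 haw
    subst haw
    have hb : b ∈ T.neighborFinset a := by
      simp only [SimpleGraph.mem_neighborFinset]; exact hab
    rw [hNw] at hb
    simp only [Finset.mem_insert, Finset.mem_singleton] at hb
    rcases hb with rfl | rfl | rfl
    · exact h1 rfl
    · exact h2 rfl
    · exact h3 rfl
  intro a b hab h1 h2 h3
  have haw : a ≠ w := hwside a b hab h1 h2 h3
  have hbw : b ≠ w := hwside b a hab.symm
    (fun h => h1 (Sym2.eq_swap.trans h)) (fun h => h2 (Sym2.eq_swap.trans h))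
    (fun h => h3 (Sym2.eq_swap.trans h))
  have hda : 0 < T.degree a := (T.degree_pos_iff_exists_adj a).2 ⟨b, hab⟩
  have hdb : 0 < T.degree b := (T.degree_pos_iff_exists_adj b).2 ⟨a, hab.symm⟩
  have hda' : (1:ℤ) ≤ (T.degree a : ℤ) := by exact_mod_cast hda
  have hdb' : (1:ℤ) ≤ (T.degree b : ℤ) := by exact_mod_cast hdb
  rw [Fe_mk, Fe_mk]
  by_cases hau : a = u
  · subst hau
    by_cases hbv : b = v
    · subst hbv
      rw [hd'u, hd'v, hdu, hdv]
      norm_num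
    · have hbu : b ≠ a := hab.ne'
      rw [hd'u, hdeq b hbu hbv hbw, hdu]
      push_cast
      linarith
  · by_cases hav : a = v
    · subst hav
      by_cases hbu : b = u
      · subst hbu
        rw [hd'v, hd'u, hdu, hdv]
        norm_num
      · have hbv : b ≠ a := hab.ne'
        rw [hd'v, hdeq b hbu hbv hbw, hdv]
        push_cast
        linarith
    · rw [hdeq a hau hav haw]
      by_cases hbu : b = u
      · subst hbu
        rw [hd'u, hdu]
        push_cast
        linarith
      · by_cases hbv : b = v
        · subst hbv
          rw [hd'v, hdv]
          push_cast
          linarith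
        · rw [hdeq b hbu hbv hbw]
          simp

lemma aux_EF
    (hE : T'.edgeSet = (T.edgeSet \ {s(w, w₁), s(w, w₂)}) ∪ {s(u, w₁), s(v, w₂)}) :
    T'.edgeFinset =
      insert s(u,w₁) (insert s(v,w₂) ((T.edgeFinset.erase s(w,w₁)).erase s(w,w₂))) := by
  apply Finset.coe_injective
  rw [coe_edgeFinset, hE]
  simp only [Finset.coe_insert, Finset.coe_erase, coe_edgeFinset]
  ext e
  simp only [Set.mem_union, Set.mem_diff, Set.mem_insert_iff, Set.mem_singleton_iff]
  tauto

lemma aux_adj_swap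
    (hadj' : ∀ a b : V, T'.Adj a b ↔
      ((T.Adj a b ∧ s(a,b) ≠ s(w,w₁) ∧ s(a,b) ≠ s(w,w₂)) ∨ s(a,b) = s(u,w₁) ∨ s(a,b) = s(v,w₂))) :
    ∀ a b : V, T'.Adj a b ↔
      ((T.Adj a b ∧ s(a,b) ≠ s(w,w₂) ∧ s(a,b) ≠ s(w,w₁)) ∨ s(a,b) = s(v,w₂) ∨ s(a,b) = s(u,w₁)) := by
  intro a b
  rw [hadj' a b]
  tauto

end Aux

theorem wp_three_deg3_swap {V : Type*} [Fintype V] (T T' : SimpleGraph V)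
    (hT : T.IsTree) (hT' : T'.IsTree)
    (u v w w₁ w₂ : V)
    (huv : u ≠ v) (huw : u ≠ w) (hvw : v ≠ w)
    (hdu : deg T u = 3) (hdv : deg T v = 3) (hdw : deg T w = 3)
    (p : T.Walk u w) (hp : p.IsPath)
    (q : T.Walk v w) (hq : q.IsPath)
    (hww₁ : T.Adj w w₁) (hww₂ : T.Adj w w₂) (hw₁w₂ : w₁ ≠ w₂)
    (hw₁p : w₁ ∉ p.support) (hw₁q : w₁ ∉ q.support)
    (hw₂p : w₂ ∉ p.support) (hw₂q : w₂ ∉ q.support)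
    (hpdeg : ∀ x ∈ p.support, x ≠ u → x ≠ w → deg T x = 4)
    (hqdeg : ∀ x ∈ q.support, x ≠ v → x ≠ w → deg T x = 4)
    (hE : T'.edgeSet = (T.edgeSet \ {s(w, w₁), s(w, w₂)}) ∪ {s(u, w₁), s(v, w₂)}) :
    Wp T ≤ Wp T' := by
  classical
  simp only [deg_eq'] at hdu hdv hdw hpdeg hqdeg
  -- basic distinctness
  have hwne₁ : w ≠ w₁ := hww₁.ne
  have hwne₂ : w ≠ w₂ := hww₂.ne
  have hup : u ∈ p.support := p.start_mem_support
  have hvq : v ∈ q.support := q.start_mem_support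
  have huw₁ : u ≠ w₁ := fun h => hw₁p (h ▸ hup)
  have huw₂ : u ≠ w₂ := fun h => hw₂p (h ▸ hup)
  have hvw₁ : v ≠ w₁ := fun h => hw₁q (h ▸ hvq)
  have hvw₂ : v ≠ w₂ := fun h => hw₂q (h ▸ hvq)
  have hunq : u ∉ q.support := fun h => by have h4 := hqdeg u h huv huw; omega
  have hvnp : v ∉ p.support := fun h => by have h4 := hpdeg v h huv.symm hvw; omega
  -- non-adjacency of u,w₁ and v,w₂ via path uniqueness
  have hnadj : ∀ (a b : V) (r : T.Walk a w), r.IsPath → a ≠ w → b ∉ r.support →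
      T.Adj w b → ¬ T.Adj a b := by
    intro a b r hr haw hbr hwb hab
    have hP1 : (r.concat hwb).IsPath := by
      rw [← Walk.isPath_reverse_iff, Walk.reverse_concat]
      exact hr.reverse.cons (by simpa [Walk.support_reverse] using hbr)
    have heq := hT.IsAcyclic.path_unique ⟨r.concat hwb, hP1⟩ (Path.singleton hab)
    have hlen : (r.concat hwb).length = 1 := by
      rw [show (r.concat hwb) = (Path.singleton hab).val from congrArg Subtype.val heq]
      simp [Path.singleton]
    rw [Walk.length_concat] at hlen
    exact haw (Walk.eq_of_length_eq_zero (p := r) (by omega))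
  have hnadjuw₁ : ¬ T.Adj u w₁ := hnadj u w₁ p hp huw hw₁p hww₁
  have hnadjvw₂ : ¬ T.Adj v w₂ := hnadj v w₂ q hq hvw hw₂q hww₂
  -- the third neighbor z of w
  have hplen : 0 < p.length := Nat.pos_of_ne_zero fun h => huw (Walk.eq_of_length_eq_zero h)
  have hqlen : 0 < q.length := Nat.pos_of_ne_zero fun h => hvw (Walk.eq_of_length_eq_zero h)
  obtain ⟨z, hadj_wz, hzp⟩ : ∃ z, T.Adj w z ∧ z ∈ p.support := by
    refine ⟨p.reverse.getVert 1, ?_, ?_⟩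
    · have h := p.reverse.adj_getVert_succ (i := 0) (by simpa using hplen)
      simpa using h
    · have h : p.reverse.getVert 1 ∈ p.reverse.support :=
        Walk.mem_support_iff_exists_getVert.2 ⟨1, rfl, by simpa using Nat.succ_le_of_lt hplen⟩
      simpa [Walk.support_reverse] using h
  obtain ⟨zq, hadj_wzq, hzqq⟩ : ∃ zq, T.Adj w zq ∧ zq ∈ q.support := by
    refine ⟨q.reverse.getVert 1, ?_, ?_⟩
    · have h := q.reverse.adj_getVert_succ (i := 0) (by simpa using hqlen)
      simpa using h
    · have h : q.reverse.getVert 1 ∈ q.reverse.support :=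
        Walk.mem_support_iff_exists_getVert.2 ⟨1, rfl, by simpa using Nat.succ_le_of_lt hqlen⟩
      simpa [Walk.support_reverse] using h
  have hzw₁ : z ≠ w₁ := fun h => hw₁p (h ▸ hzp)
  have hzw₂ : z ≠ w₂ := fun h => hw₂p (h ▸ hzp)
  have hNw : T.neighborFinset w = {w₁, w₂, z} := by
    symm
    apply Finset.eq_of_subset_of_card_le
    · intro x hx
      simp only [Finset.mem_insert, Finset.mem_singleton] at hx
      simp only [SimpleGraph.mem_neighborFinset]
      rcases hx with rfl | rfl | rfl
      · exact hww₁
      · exact hww₂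
      · exact hadj_wz
    · rw [card_neighborFinset_eq_degree, hdw,
        Finset.card_insert_of_notMem (by simp [hw₁w₂, hzw₁.symm]),
        Finset.card_insert_of_notMem (by simp [hzw₂.symm]), Finset.card_singleton]
  have hzqz : zq = z := by
    have h1 : zq ∈ T.neighborFinset w := by
      simp only [SimpleGraph.mem_neighborFinset]; exact hadj_wzq
    rw [hNw] at h1
    simp only [Finset.mem_insert, Finset.mem_singleton] at h1
    rcases h1 with rfl | rfl | h1
    · exact absurd hzqq hw₁q
    · exact absurd hzqq hw₂q
    · exact h1
  subst hzqz
  have hzu : zq ≠ u := fun h => hunq (h ▸ hzqq)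
  have hzv : zq ≠ v := fun h => hvnp (h ▸ hzp)
  have hzw : zq ≠ w := hadj_wz.ne'
  have hdz : T.degree zq = 4 := hpdeg zq hzp hzu hzw
  have hnadjuw : ¬ T.Adj u w := fun h => by
    have h1 : u ∈ T.neighborFinset w := by
      simp only [SimpleGraph.mem_neighborFinset]; exact h.symm
    rw [hNw] at h1
    simp only [Finset.mem_insert, Finset.mem_singleton] at h1
    rcases h1 with rfl | rfl | rfl
    · exact huw₁ rfl
    · exact huw₂ rfl
    · exact hzu rfl
  have hnadjvw : ¬ T.Adj v w := fun h => by
    have h1 : v ∈ T.neighborFinset w := by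
      simp only [SimpleGraph.mem_neighborFinset]; exact h.symm
    rw [hNw] at h1
    simp only [Finset.mem_insert, Finset.mem_singleton] at h1
    rcases h1 with rfl | rfl | rfl
    · exact hvw₁ rfl
    · exact hvw₂ rfl
    · exact hzv rfl
  -- path neighbors of u and v
  obtain ⟨u', hadj_uu', hu'p⟩ : ∃ u', T.Adj u u' ∧ u' ∈ p.support := by
    refine ⟨p.getVert 1, ?_, Walk.mem_support_iff_exists_getVert.2 ⟨1, rfl, hplen⟩⟩
    have h := p.adj_getVert_succ (i := 0) hplen
    simpa using h
  obtain ⟨v', hadj_vv', hv'q⟩ : ∃ v', T.Adj v v' ∧ v' ∈ q.support := by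
    refine ⟨q.getVert 1, ?_, Walk.mem_support_iff_exists_getVert.2 ⟨1, rfl, hqlen⟩⟩
    have h := q.adj_getVert_succ (i := 0) hqlen
    simpa using h
  have hu'u : u' ≠ u := hadj_uu'.ne'
  have hu'w : u' ≠ w := fun h => hnadjuw (h ▸ hadj_uu')
  have hu'v : u' ≠ v := fun h => hvnp (h ▸ hu'p)
  have hdu' : T.degree u' = 4 := hpdeg u' hu'p hu'u hu'w
  have hv'v : v' ≠ v := hadj_vv'.ne'
  have hv'w : v' ≠ w := fun h => hnadjvw (h ▸ hadj_vv')
  have hv'u : v' ≠ u := fun h => hunq (h ▸ hv'q)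
  have hdv' : T.degree v' = 4 := hqdeg v' hv'q hv'v hv'w
  -- adjacency characterization and degrees in T'
  have hadj' := aux_adj hE
  have hadj'v := aux_adj_swap hadj'
  have hd'u : T'.degree u = 4 := by
    rw [aux_degu hadj' huw huw₁ huw₂ huv hnadjuw₁, hdu]
  have hd'v : T'.degree v = 4 := by
    rw [aux_degu hadj'v hvw hvw₂ hvw₁ huv.symm hnadjvw₂, hdv]
  have hd'w : T'.degree w = 1 :=
    aux_degw hadj' hNw huw.symm hvw.symm hwne₁ hwne₂ hzw₁ hzw₂ hadj_wz
  have hd'w₁ : T'.degree w₁ = T.degree w₁ :=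
    aux_degw₁ hadj' hwne₁.symm hw₁w₂ huw₁.symm hvw₁.symm hww₁ hnadjuw₁
  have hd'w₂ : T'.degree w₂ = T.degree w₂ :=
    aux_degw₁ hadj'v hwne₂.symm hw₁w₂.symm hvw₂.symm huw₂.symm hww₂ hnadjvw₂
  have hdeq : ∀ x : V, x ≠ u → x ≠ v → x ≠ w → T'.degree x = T.degree x := by
    intro x h1 h2 h3
    by_cases h4 : x = w₁
    · subst h4; exact hd'w₁
    by_cases h5 : x = w₂
    · subst h5; exact hd'w₂
    exact aux_deggen hadj' h1 h2 h3 h4 h5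
  -- edge bookkeeping
  have hSne : ∀ (a b c d : V), a ≠ c → a ≠ d → s(a,b) ≠ s(c,d) := by
    intro a b c d h1 h2 h
    rcases Sym2.eq_iff.1 h with ⟨h3, -⟩ | ⟨h3, -⟩
    · exact h1 h3
    · exact h2 h3
  have he₂e₁ : s(w,w₂) ≠ s(w,w₁) := by
    intro h
    rcases Sym2.eq_iff.1 h with ⟨-, h3⟩ | ⟨h3, -⟩
    · exact hw₁w₂ h3.symm
    · exact hwne₁ h3
  have he₃e₄ : s(u,w₁) ≠ s(v,w₂) := hSne u w₁ v w₂ huv huw₂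
  have he₁E : s(w,w₁) ∈ T.edgeFinset := by
    rw [mem_edgeFinset, SimpleGraph.mem_edgeSet]; exact hww₁
  have he₂E : s(w,w₂) ∈ T.edgeFinset := by
    rw [mem_edgeFinset, SimpleGraph.mem_edgeSet]; exact hww₂
  have he₃E : s(u,w₁) ∉ T.edgeFinset := by
    rw [mem_edgeFinset, SimpleGraph.mem_edgeSet]; exact hnadjuw₁
  have he₄E : s(v,w₂) ∉ T.edgeFinset := by
    rw [mem_edgeFinset, SimpleGraph.mem_edgeSet]; exact hnadjvw₂
  set D : Finset (Sym2 V) := (T.edgeFinset.erase s(w,w₁)).erase s(w,w₂) with hD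
  have hDsub : D ⊆ T.edgeFinset := (Finset.erase_subset _ _).trans (Finset.erase_subset _ _)
  have hEF : T'.edgeFinset = insert s(u,w₁) (insert s(v,w₂) D) := aux_EF hE
  have hW' : Wp T' = Fe T' s(u,w₁) + Fe T' s(v,w₂) + ∑ e ∈ D, Fe T' e := by
    rw [Wp_eq', hEF, Finset.sum_insert (by
        intro h
        rcases Finset.mem_insert.1 h with h | h
        · exact he₃e₄ h
        · exact he₃E (hDsub h)),
      Finset.sum_insert (fun h => he₄E (hDsub h))]
    ring
  have hW : Wp T = Fe T s(w,w₁) + Fe T s(w,w₂) + ∑ e ∈ D, Fe T e := by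
    have h2 : s(w,w₂) ∈ T.edgeFinset.erase s(w,w₁) := Finset.mem_erase.2 ⟨he₂e₁, he₂E⟩
    rw [Wp_eq', ← Finset.insert_erase he₁E,
      Finset.sum_insert (Finset.notMem_erase _ _), ← Finset.insert_erase h2,
      Finset.sum_insert (Finset.notMem_erase _ _), ← hD]
    ring
  -- the three special edges in D
  have hmemD : ∀ a b : V, T.Adj a b → a ≠ w → a ≠ w₁ → a ≠ w₂ → s(a,b) ∈ D := by
    intro a b hab h1 h2 h3
    refine Finset.mem_erase.2 ⟨hSne a b w w₂ h1 h3, Finset.mem_erase.2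
      ⟨hSne a b w w₁ h1 h2, ?_⟩⟩
    rw [mem_edgeFinset, SimpleGraph.mem_edgeSet]; exact hab
  have heuD : s(u,u') ∈ D := hmemD u u' hadj_uu' huw huw₁ huw₂
  have hevD : s(v,v') ∈ D := hmemD v v' hadj_vv' hvw hvw₁ hvw₂
  have hewD : s(w,zq) ∈ D := by
    refine Finset.mem_erase.2 ⟨?_, Finset.mem_erase.2 ⟨?_, ?_⟩⟩
    · intro h
      rcases Sym2.eq_iff.1 h with ⟨-, h3⟩ | ⟨h3, -⟩
      · exact hzw₂ h3
      · exact hwne₂ h3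
    · intro h
      rcases Sym2.eq_iff.1 h with ⟨-, h3⟩ | ⟨h3, -⟩
      · exact hzw₁ h3
      · exact hwne₁ h3
    · rw [mem_edgeFinset, SimpleGraph.mem_edgeSet]; exact hadj_wz
  have heuev : s(u,u') ≠ s(v,v') := hSne u u' v v' huv (fun h => hv'u h.symm)
  have heuew : s(u,u') ≠ s(w,zq) := hSne u u' w zq huw (fun h => hzu h.symm)
  have hevew : s(v,v') ≠ s(w,zq) := hSne v v' w zq hvw (fun h => hzv h.symm)
  set K : Finset (Sym2 V) := {s(u,u'), s(v,v'), s(w,zq)} with hK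
  have hKD : K ⊆ D := by
    intro e he
    rw [hK] at he
    rcases Finset.mem_insert.1 he with rfl | he
    · exact heuD
    rcases Finset.mem_insert.1 he with rfl | he
    · exact hevD
    rw [Finset.mem_singleton] at he
    subst he
    exact hewD
  have hsplit : ∑ e ∈ D, (Fe T' e - Fe T e) =
      ∑ e ∈ D \ K, (Fe T' e - Fe T e) + ∑ e ∈ K, (Fe T' e - Fe T e) :=
    (Finset.sum_sdiff hKD).symm
  have hKsum : ∑ e ∈ K, (Fe T' e - Fe T e) = 0 := by
    rw [hK, Finset.sum_insert (by
        intro h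
        rcases Finset.mem_insert.1 h with h | h
        · exact heuev h
        · exact heuew (Finset.mem_singleton.1 h)),
      Finset.sum_insert (fun h => hevew (Finset.mem_singleton.1 h)),
      Finset.sum_singleton]
    have e1 : Fe T' s(u,u') - Fe T s(u,u') = 3 := by
      rw [Fe_mk, Fe_mk, hd'u, hdeq u' hu'u hu'v hu'w, hdu, hdu']
      norm_num
    have e2 : Fe T' s(v,v') - Fe T s(v,v') = 3 := by
      rw [Fe_mk, Fe_mk, hd'v, hdeq v' hv'u hv'v hv'w, hdv, hdv']
      norm_num
    have e3 : Fe T' s(w,zq) - Fe T s(w,zq) = -6 := by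
      rw [Fe_mk, Fe_mk, hd'w, hdeq zq hzu hzv hzw, hdw, hdz]
      norm_num
    rw [e1, e2, e3]
    norm_num
  have hrest : 0 ≤ ∑ e ∈ D \ K, (Fe T' e - Fe T e) := by
    apply Finset.sum_nonneg
    intro e he
    induction e using Sym2.ind with
    | _ a b =>
      rw [Finset.mem_sdiff] at he
      obtain ⟨heD, heK⟩ := he
      rw [hK] at heK
      simp only [Finset.mem_insert, Finset.mem_singleton] at heK
      push_neg at heK
      obtain ⟨-, -, hk3⟩ := heK
      have hab : T.Adj a b := by
        have h := hDsub heD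
        rwa [mem_edgeFinset, SimpleGraph.mem_edgeSet] at h
      have h2 : s(a,b) ≠ s(w,w₂) := (Finset.mem_erase.1 heD).1
      have h1 : s(a,b) ≠ s(w,w₁) := (Finset.mem_erase.1 (Finset.mem_erase.1 heD).2).1
      exact aux_perEdge hNw hd'u hd'v hdu hdv hdeq a b hab h1 h2 hk3
  have hB₁ : 0 ≤ Fe T' s(u,w₁) - Fe T s(w,w₁) := by
    have hpos : 0 < T.degree w₁ := (T.degree_pos_iff_exists_adj w₁).2 ⟨w, hww₁.symm⟩
    have hpos' : (1:ℤ) ≤ (T.degree w₁ : ℤ) := by exact_mod_cast hpos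
    rw [Fe_mk, Fe_mk, hd'u, hd'w₁, hdw]
    push_cast
    nlinarith
  have hB₂ : 0 ≤ Fe T' s(v,w₂) - Fe T s(w,w₂) := by
    have hpos : 0 < T.degree w₂ := (T.degree_pos_iff_exists_adj w₂).2 ⟨w, hww₂.symm⟩
    have hpos' : (1:ℤ) ≤ (T.degree w₂ : ℤ) := by exact_mod_cast hpos
    rw [Fe_mk, Fe_mk, hd'v, hd'w₂, hdw]
    push_cast
    nlinarith
  have hsum : ∑ e ∈ D, Fe T' e - ∑ e ∈ D, Fe T e = ∑ e ∈ D, (Fe T' e - Fe T e) :=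
    (Finset.sum_sub_distrib _ _).symm
  rw [hW, hW']
  linarith [hsplit, hKsum, hrest, hB₁, hB₂, hsum]
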